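/- The duality case ζ(4) = ζ(2,1,1): Σ_{m≥1} 1/m⁴ = Σ_{m₁>m₂>m₃≥1} 1/(m₁² m₂ m₃). -/

import Mathlib

open Finset ENNReal Filter

namespace ZD

/-- telescoping engine -/
lemma tele_engine (g : ℕ → ℝ) (h0 : Tendsto g atTop (nhds 0))
    (hnn : ∀ e, 0 ≤ g e - g (e+1)) :
    HasSum (fun e => g e - g (e+1)) (g 0) := by
  rw [hasSum_iff_tendsto_nat_of_nonneg hnn]
  have : ∀ n, ∑ i ∈ range n, (g i - g (i+1)) = g 0 - g n := by
    intro n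
    simpa using Finset.sum_range_sub' g n
  simp only [this]
  simpa using (tendsto_const_nhds (x := g 0)).sub h0

/-- TL2 -/
lemma tele_hasSum (M : ℕ) :
    HasSum (fun e : ℕ => (1:ℝ)/(((M:ℝ)+(e:ℝ)+1)*((M:ℝ)+(e:ℝ)+2))) (1/((M:ℝ)+1)) := by
  have h := tele_engine (fun e => 1/((M:ℝ)+(e:ℝ)+1)) ?_ ?_
  · convert h using 2 with e
    · push_cast
      have h1 : ((M:ℝ)+(e:ℝ)+1) > 0 := by positivity
      have h2 : ((M:ℝ)+(e:ℝ)+2) > 0 := by positivity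
      rw [div_sub_div _ _ (by positivity : ((M:ℝ)+(e:ℝ)+1) ≠ 0) (by positivity : ((M:ℝ)+((e:ℝ)+1)+1) ≠ 0)]
      ring_nf
    · norm_num
  · have : Tendsto (fun e : ℕ => (e:ℝ) + ((M:ℝ)+1)) atTop atTop := by
      apply Filter.tendsto_atTop_add_const_right
      exact tendsto_natCast_atTop_atTop
    have := this.inv_tendsto_atTop
    convert this using 2 with e
    · simp [one_div]; ring_nf
  · intro e
    push_cast
    have h1 : ((M:ℝ)+(e:ℝ)+1) > 0 := by positivity
    have h2 : ((M:ℝ)+(e:ℝ)+2) > 0 := by positivity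
    rw [sub_nonneg]
    -- push_cast
    gcongr
    linarith


lemma tendsto_inv_shift (c : ℝ) : Tendsto (fun e : ℕ => 1/((e:ℝ)+c)) atTop (nhds 0) := by
  have : Tendsto (fun e : ℕ => (e:ℝ) + c) atTop atTop :=
    Filter.tendsto_atTop_add_const_right _ c tendsto_natCast_atTop_atTop
  rw [show (fun e : ℕ => 1/((e:ℝ)+c)) = fun e : ℕ => ((e:ℝ)+c)⁻¹ from funext fun e => one_div _]
  exact this.inv_tendsto_atTop

/-- L1 -/
lemma harm_hasSum (T : ℕ) :
    HasSum (fun e : ℕ => (1:ℝ)/(((e:ℝ)+1)*((e:ℝ)+(T:ℝ)+2)))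
      ((∑ k ∈ range (T+1), 1/((k:ℝ)+1))/((T:ℝ)+1)) := by
  set g : ℕ → ℝ := fun e => ∑ k ∈ range (T+1), 1/((e:ℝ)+(k:ℝ)+1) with hg
  have hdiff : ∀ e : ℕ, g e - g (e+1) = 1/((e:ℝ)+1) - 1/((e:ℝ)+(T:ℝ)+2) := by
    intro e
    have step : g e - g (e+1) =
        ∑ k ∈ range (T+1), ((fun j : ℕ => 1/((e:ℝ)+(j:ℝ)+1)) k
          - (fun j : ℕ => 1/((e:ℝ)+(j:ℝ)+1)) (k+1)) := by
      rw [hg, ← Finset.sum_sub_distrib]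
      apply Finset.sum_congr rfl
      intro k _
      push_cast
      ring
    rw [step, Finset.sum_range_sub' (fun j : ℕ => 1/((e:ℝ)+(j:ℝ)+1)) (T+1)]
    push_cast
    ring
  have h0 : Tendsto g atTop (nhds 0) := by
    rw [hg]
    have : Tendsto (fun e : ℕ => ∑ k ∈ range (T+1), 1/((e:ℝ)+(k:ℝ)+1)) atTop
        (nhds (∑ k ∈ range (T+1), (0:ℝ))) := by
      apply tendsto_finset_sum
      intro k _
      simpa [add_assoc] using tendsto_inv_shift ((k:ℝ)+1)
    simpa using this
  have hnn : ∀ e : ℕ, 0 ≤ g e - g (e+1) := by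
    intro e
    rw [hdiff e, sub_nonneg]
    gcongr
    · linarith
    · norm_num
  have hmain := (tele_engine g h0 hnn).div_const ((T:ℝ)+1)
  have hg0 : g 0 = ∑ k ∈ range (T+1), 1/((k:ℝ)+1) := by
    rw [hg]; norm_num
  rw [hg0] at hmain
  have hfun : (fun e : ℕ => (1:ℝ)/(((e:ℝ)+1)*((e:ℝ)+(T:ℝ)+2)))
      = fun i => (g i - g (i+1))/((T:ℝ)+1) := by
    funext e
    rw [hdiff e]
    have h1 : ((e:ℝ)+1) ≠ 0 := by positivity
    have h2 : ((e:ℝ)+(T:ℝ)+2) ≠ 0 := by positivity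
    have h3 : ((T:ℝ)+1) ≠ 0 := by positivity
    field_simp
    ring
  rw [hfun]; exact hmain


lemma ofReal_tsum {f : ℕ → ℝ} (hnn : ∀ n, 0 ≤ f n) {a : ℝ} (h : HasSum f a) :
    ∑' n, ENNReal.ofReal (f n) = ENNReal.ofReal a := by
  rw [← ENNReal.ofReal_tsum_of_nonneg hnn h.summable, h.tsum_eq]

lemma tri (g : ℕ → ℕ → ℝ≥0∞) :
    ∑' n : ℕ, ∑ m ∈ range n, g n m = ∑' m : ℕ, ∑' i : ℕ, g (m+i+1) m := by
  have h1 : ∀ n : ℕ, ∑ m ∈ range n, g n m = ∑' m : ℕ, if m < n then g n m else 0 := by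
    intro n
    rw [tsum_eq_sum (s := range n) ?_]
    · exact Finset.sum_congr rfl fun m hm => (if_pos (mem_range.mp hm)).symm
    · intro m hm
      exact if_neg (by simpa using hm)
  rw [tsum_congr h1, ENNReal.tsum_comm]
  apply tsum_congr
  intro m
  have hinj : Function.Injective (fun i : ℕ => m+1+i) := fun a b h => by
    simpa using h
  rw [← Function.Injective.tsum_eq hinj ?_]
  · apply tsum_congr
    intro i
    show (if m < m+1+i then g (m+1+i) m else 0) = g (m+i+1) m
    rw [if_pos (by omega)]
    congr 1
    omega
  · intro n hn
    simp only [Function.mem_support] at hn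
    by_cases h : m < n
    · exact ⟨n - m - 1, show m+1+(n-m-1) = n by omega⟩
    · exact absurd (if_neg h) hn

lemma sum_range_split {β : Type*} [AddCommMonoid β] (c d : ℕ) (φ : ℕ → β) :
    ∑ m ∈ range (c+d+1), φ m
      = (∑ m ∈ range c, φ m) + φ c + ∑ j ∈ range d, φ (c+1+j) := by
  induction d with
  | zero => simp [Finset.sum_range_succ]
  | succ d ih =>
      have h1 : c + (d+1) + 1 = (c+d+1)+1 := by omega
      rw [h1, Finset.sum_range_succ, ih, Finset.sum_range_succ]
      have h2 : c+1+d = c+d+1 := by omega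
      rw [h2, add_assoc]


noncomputable section

def H (t : ℕ) : ℝ := ∑ k ∈ range t, 1/((k:ℝ)+1)

lemma H_nonneg (t : ℕ) : 0 ≤ H t :=
  Finset.sum_nonneg fun k _ => by positivity

def r4 (n : ℕ) : ℝ := 1/((n:ℝ)+1)^4
def r31 (k d : ℕ) : ℝ := 1/(((k:ℝ)+(d:ℝ)+2)^3*((k:ℝ)+1))
def r22 (k d : ℕ) : ℝ := 1/(((k:ℝ)+(d:ℝ)+2)^2*((k:ℝ)+1)^2)
def r211 (c d e : ℕ) : ℝ := 1/(((c:ℝ)+(d:ℝ)+(e:ℝ)+3)^2*(((c:ℝ)+(d:ℝ)+2)*((c:ℝ)+1)))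
def rA (m n : ℕ) : ℝ := 1/((((m:ℝ)+1)*((n:ℝ)+1)^2)*((m:ℝ)+(n:ℝ)+2))
def rP (c d e : ℕ) : ℝ := 1/((((c:ℝ)+1)*((e:ℝ)+1))*(((c:ℝ)+(d:ℝ)+2)*((c:ℝ)+(d:ℝ)+(e:ℝ)+3)))

def A4 : ℝ≥0∞ := ∑' n : ℕ, ENNReal.ofReal (r4 n)
def A31 : ℝ≥0∞ := ∑' k : ℕ, ∑' d : ℕ, ENNReal.ofReal (r31 k d)
def A22 : ℝ≥0∞ := ∑' k : ℕ, ∑' d : ℕ, ENNReal.ofReal (r22 k d)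
def A211 : ℝ≥0∞ := ∑' c : ℕ, ∑' d : ℕ, ∑' e : ℕ, ENNReal.ofReal (r211 c d e)

lemma S1a : (∑' n : ℕ, ∑' m : ℕ, ENNReal.ofReal (rA m n)) = A4 + A31 := by
  have inner : ∀ n : ℕ, (∑' m : ℕ, ENNReal.ofReal (rA m n))
      = ENNReal.ofReal (H (n+1) / ((n:ℝ)+1)^3) := by
    intro n
    have hfac : ∀ m : ℕ, ENNReal.ofReal (rA m n)
        = ENNReal.ofReal (1/((n:ℝ)+1)^2)
          * ENNReal.ofReal (1/(((m:ℝ)+1)*((m:ℝ)+(n:ℝ)+2))) := by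
      intro m
      rw [← ENNReal.ofReal_mul (by positivity)]
      congr 1
      unfold rA
      have h1 : ((m:ℝ)+1) ≠ 0 := by positivity
      have h2 : ((n:ℝ)+1) ≠ 0 := by positivity
      have h3 : ((m:ℝ)+(n:ℝ)+2) ≠ 0 := by positivity
      field_simp
    rw [tsum_congr hfac, ENNReal.tsum_mul_left,
      ofReal_tsum (fun m => by positivity) (harm_hasSum n),
      ← ENNReal.ofReal_mul (by positivity)]
    congr 1
    rw [div_mul_div_comm, one_mul, show ((n:ℝ)+1)^2*((n:ℝ)+1) = ((n:ℝ)+1)^3 from by ring]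
    rfl
  rw [tsum_congr inner]
  have split : ∀ n : ℕ, ENNReal.ofReal (H (n+1) / ((n:ℝ)+1)^3)
      = ENNReal.ofReal (H n / ((n:ℝ)+1)^3) + ENNReal.ofReal (r4 n) := by
    intro n
    rw [← ENNReal.ofReal_add (div_nonneg (H_nonneg n) (by positivity)) (by unfold r4; positivity)]
    congr 1
    unfold H r4
    rw [Finset.sum_range_succ, add_div]
    congr 1
    rw [div_div, one_div, one_div]
    congr 1
    ring
  rw [tsum_congr split, ENNReal.tsum_add, add_comm]
  congr 1
  have expand : ∀ n : ℕ, ENNReal.ofReal (H n / ((n:ℝ)+1)^3)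
      = ∑ k ∈ range n, ENNReal.ofReal (1/((((n:ℝ)+1)^3)*((k:ℝ)+1))) := by
    intro n
    rw [← ENNReal.ofReal_sum_of_nonneg (fun k _ => by positivity)]
    congr 1
    unfold H
    rw [Finset.sum_div]
    apply Finset.sum_congr rfl
    intro k _
    have h1 : ((k:ℝ)+1) ≠ 0 := by positivity
    have h2 : ((n:ℝ)+1) ≠ 0 := by positivity
    field_simp
  rw [tsum_congr expand,
    tri (fun n k => ENNReal.ofReal (1/((((n:ℝ)+1)^3)*((k:ℝ)+1))))]
  unfold A31
  apply tsum_congr; intro k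
  apply tsum_congr; intro i
  congr 1
  unfold r31
  push_cast
  ring_nf

lemma r4_nn (n : ℕ) : 0 ≤ r4 n := by unfold r4; positivity
lemma r31_nn (k d : ℕ) : 0 ≤ r31 k d := by unfold r31; positivity
lemma r22_nn (k d : ℕ) : 0 ≤ r22 k d := by unfold r22; positivity
lemma r211_nn (c d e : ℕ) : 0 ≤ r211 c d e := by unfold r211; positivity
lemma rP_nn (c d e : ℕ) : 0 ≤ rP c d e := by unfold rP; positivity

lemma S1b : (∑' n : ℕ, ∑' m : ℕ, ENNReal.ofReal (rA m n)) = A31 + A31 + A22 := by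
  have pointw : ∀ n m : ℕ, ENNReal.ofReal (rA m n)
      = ENNReal.ofReal (r31 n m) + ENNReal.ofReal (r31 m n) + ENNReal.ofReal (r22 n m) := by
    intro n m
    rw [← ENNReal.ofReal_add (r31_nn n m) (r31_nn m n),
      ← ENNReal.ofReal_add (add_nonneg (r31_nn n m) (r31_nn m n)) (r22_nn n m)]
    congr 1
    unfold rA r31 r22
    have h1 : ((m:ℝ)+1) ≠ 0 := by positivity
    have h2 : ((n:ℝ)+1) ≠ 0 := by positivity
    have h3 : ((m:ℝ)+(n:ℝ)+2) ≠ 0 := by positivity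
    have h4 : ((n:ℝ)+(m:ℝ)+2) ≠ 0 := by positivity
    field_simp
    ring
  calc ∑' n : ℕ, ∑' m : ℕ, ENNReal.ofReal (rA m n)
      = ∑' n : ℕ, ((∑' m : ℕ, ENNReal.ofReal (r31 n m))
          + (∑' m : ℕ, ENNReal.ofReal (r31 m n))
          + (∑' m : ℕ, ENNReal.ofReal (r22 n m))) := by
        apply tsum_congr; intro n
        rw [tsum_congr (pointw n), ENNReal.tsum_add, ENNReal.tsum_add]
    _ = A31 + A31 + A22 := by
        rw [ENNReal.tsum_add, ENNReal.tsum_add]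
        congr 1
        congr 1
        exact ENNReal.tsum_comm

lemma sq_summable : Summable (fun k : ℕ => 1/((k:ℝ)+1)^2) := by
  have h := (summable_nat_add_iff (f := fun n : ℕ => 1/(n:ℝ)^2) 1).mpr
    ((Real.summable_one_div_nat_pow (p := 2)).mpr one_lt_two)
  apply h.congr
  intro n
  push_cast
  ring

lemma sq_tsum_ne_top : (∑' k : ℕ, ENNReal.ofReal (1/((k:ℝ)+1)^2)) ≠ ⊤ := by
  rw [ofReal_tsum (fun k => by positivity) sq_summable.hasSum]
  exact ENNReal.ofReal_ne_top

lemma A31_inner_le (k : ℕ) :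
    (∑' d : ℕ, ENNReal.ofReal (r31 k d)) ≤ ENNReal.ofReal (1/((k:ℝ)+1)^2) := by
  calc (∑' d : ℕ, ENNReal.ofReal (r31 k d))
      ≤ ∑' d : ℕ, (ENNReal.ofReal (1/((k:ℝ)+1)^2)
          * ENNReal.ofReal (1/(((k:ℝ)+(d:ℝ)+1)*((k:ℝ)+(d:ℝ)+2)))) := by
        apply ENNReal.tsum_le_tsum
        intro d
        rw [← ENNReal.ofReal_mul (by positivity)]
        apply ENNReal.ofReal_le_ofReal
        unfold r31
        rw [div_mul_div_comm, one_mul]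
        apply one_div_le_one_div_of_le (by positivity)
        have hx : (0:ℝ) ≤ (k:ℝ) := Nat.cast_nonneg k
        have hy : (0:ℝ) ≤ (d:ℝ) := Nat.cast_nonneg d
        nlinarith [mul_nonneg hx hy, sq_nonneg ((k:ℝ)+(d:ℝ))]
    _ = ENNReal.ofReal (1/((k:ℝ)+1)^2)
          * ∑' d : ℕ, ENNReal.ofReal (1/(((k:ℝ)+(d:ℝ)+1)*((k:ℝ)+(d:ℝ)+2))) :=
        ENNReal.tsum_mul_left
    _ ≤ ENNReal.ofReal (1/((k:ℝ)+1)^2) * 1 := by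
        gcongr
        rw [ofReal_tsum (fun d => by positivity) (tele_hasSum k)]
        exact ENNReal.ofReal_le_one.mpr (by
          rw [div_le_one (by positivity)]
          linarith [Nat.cast_nonneg (α := ℝ) k])
    _ = ENNReal.ofReal (1/((k:ℝ)+1)^2) := mul_one _

lemma A31_ne_top : A31 ≠ ⊤ := by
  apply ne_top_of_le_ne_top sq_tsum_ne_top
  exact ENNReal.tsum_le_tsum A31_inner_le

lemma key1 : A4 = A31 + A22 := by
  have h := S1a.symm.trans S1b
  rw [add_comm A4 A31, add_assoc] at h
  exact (ENNReal.add_right_inj A31_ne_top).mp h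

def rY (c d e : ℕ) : ℝ := 1/((((c:ℝ)+1)*((e:ℝ)+1))*((c:ℝ)+(d:ℝ)+(e:ℝ)+3)^2)
def rY1 (c d e : ℕ) : ℝ := 1/((((c:ℝ)+(e:ℝ)+2)*((c:ℝ)+1))*((c:ℝ)+(d:ℝ)+(e:ℝ)+3)^2)
def rY2 (c d e : ℕ) : ℝ := 1/((((c:ℝ)+(e:ℝ)+2)*((e:ℝ)+1))*((c:ℝ)+(d:ℝ)+(e:ℝ)+3)^2)

lemma rY_nn (c d e : ℕ) : 0 ≤ rY c d e := by unfold rY; positivity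
lemma rY1_nn (c d e : ℕ) : 0 ≤ rY1 c d e := by unfold rY1; positivity
lemma rY2_nn (c d e : ℕ) : 0 ≤ rY2 c d e := by unfold rY2; positivity

lemma tsum3_rev (f : ℕ → ℕ → ℕ → ℝ≥0∞) :
    (∑' a : ℕ, ∑' b : ℕ, ∑' c : ℕ, f a b c)
      = ∑' c : ℕ, ∑' b : ℕ, ∑' a : ℕ, f a b c := by
  calc (∑' a : ℕ, ∑' b : ℕ, ∑' c : ℕ, f a b c)
      = ∑' b : ℕ, ∑' a : ℕ, ∑' c : ℕ, f a b c := ENNReal.tsum_comm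
    _ = ∑' b : ℕ, ∑' c : ℕ, ∑' a : ℕ, f a b c := tsum_congr fun b => ENNReal.tsum_comm
    _ = ∑' c : ℕ, ∑' b : ℕ, ∑' a : ℕ, f a b c := ENNReal.tsum_comm

lemma hY1 : (∑' c : ℕ, ∑' d : ℕ, ∑' e : ℕ, ENNReal.ofReal (rY1 c d e)) = A211 := by
  rw [tsum_congr (fun c => ENNReal.tsum_comm
    (f := fun d e => ENNReal.ofReal (rY1 c d e)))]
  unfold A211
  apply tsum_congr; intro c
  apply tsum_congr; intro x
  apply tsum_congr; intro y
  congr 1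
  unfold rY1 r211
  ring_nf

lemma hY2 : (∑' c : ℕ, ∑' d : ℕ, ∑' e : ℕ, ENNReal.ofReal (rY2 c d e)) = A211 := by
  rw [tsum3_rev (fun c d e => ENNReal.ofReal (rY2 c d e))]
  rw [← hY1]
  apply tsum_congr; intro a
  apply tsum_congr; intro b
  apply tsum_congr; intro g
  congr 1
  unfold rY1 rY2
  ring_nf

lemma S2ab : (∑' c : ℕ, ∑' d : ℕ, ∑' e : ℕ, ENNReal.ofReal (rP c d e))
    = A211 + (A211 + A211) := by
  have pointw : ∀ c d e : ℕ, ENNReal.ofReal (rP c d e)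
      = ENNReal.ofReal (r211 c d e)
        + (ENNReal.ofReal (rY1 c d e) + ENNReal.ofReal (rY2 c d e)) := by
    intro c d e
    rw [← ENNReal.ofReal_add (rY1_nn c d e) (rY2_nn c d e),
      ← ENNReal.ofReal_add (r211_nn c d e) (add_nonneg (rY1_nn c d e) (rY2_nn c d e))]
    congr 1
    unfold rP r211 rY1 rY2
    have h1 : ((c:ℝ)+1) ≠ 0 := by positivity
    have h2 : ((e:ℝ)+1) ≠ 0 := by positivity
    have h3 : ((c:ℝ)+(d:ℝ)+2) ≠ 0 := by positivity
    have h4 : ((c:ℝ)+(d:ℝ)+(e:ℝ)+3) ≠ 0 := by positivity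
    have h5 : ((c:ℝ)+(e:ℝ)+2) ≠ 0 := by positivity
    field_simp
    ring
  calc (∑' c : ℕ, ∑' d : ℕ, ∑' e : ℕ, ENNReal.ofReal (rP c d e))
      = (∑' c : ℕ, ∑' d : ℕ, ∑' e : ℕ, ENNReal.ofReal (r211 c d e))
        + ((∑' c : ℕ, ∑' d : ℕ, ∑' e : ℕ, ENNReal.ofReal (rY1 c d e))
          + (∑' c : ℕ, ∑' d : ℕ, ∑' e : ℕ, ENNReal.ofReal (rY2 c d e))) := by
        rw [← ENNReal.tsum_add, ← ENNReal.tsum_add]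
        apply tsum_congr; intro c
        rw [← ENNReal.tsum_add, ← ENNReal.tsum_add]
        apply tsum_congr; intro d
        rw [← ENNReal.tsum_add, ← ENNReal.tsum_add]
        exact tsum_congr fun e => pointw c d e
    _ = A211 + (A211 + A211) := by rw [hY1, hY2]; rfl

lemma S2c_inner (c d : ℕ) : (∑' e : ℕ, ENNReal.ofReal (rP c d e))
    = ENNReal.ofReal (H (c+d+2) / (((c:ℝ)+(d:ℝ)+2)^2 * ((c:ℝ)+1))) := by
  have hfac : ∀ e : ℕ, ENNReal.ofReal (rP c d e)
      = ENNReal.ofReal (1/(((c:ℝ)+1)*((c:ℝ)+(d:ℝ)+2)))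
        * ENNReal.ofReal (1/(((e:ℝ)+1)*((e:ℝ)+((c+d+1:ℕ):ℝ)+2))) := by
    intro e
    rw [← ENNReal.ofReal_mul (by positivity)]
    congr 1
    unfold rP
    push_cast
    have h1 : ((c:ℝ)+1) ≠ 0 := by positivity
    have h2 : ((e:ℝ)+1) ≠ 0 := by positivity
    have h3 : ((c:ℝ)+(d:ℝ)+2) ≠ 0 := by positivity
    have h4 : ((c:ℝ)+(d:ℝ)+(e:ℝ)+3) ≠ 0 := by positivity
    have h5 : ((e:ℝ)+((c:ℝ)+(d:ℝ)+1)+2) ≠ 0 := by positivity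
    field_simp
    ring
  rw [tsum_congr hfac, ENNReal.tsum_mul_left,
    ofReal_tsum (fun e => by positivity) (harm_hasSum (c+d+1)),
    ← ENNReal.ofReal_mul (by positivity)]
  congr 1
  rw [div_mul_div_comm, one_mul]
  have : (c+d+1)+1 = c+d+2 := by omega
  rw [this]
  unfold H
  push_cast
  congr 1
  ring

lemma S2c : (∑' c : ℕ, ∑' d : ℕ, ∑' e : ℕ, ENNReal.ofReal (rP c d e))
    = A211 + (A211 + (A22 + A31)) := by
  have hsplit : ∀ c d : ℕ,
      ENNReal.ofReal (H (c+d+2) / (((c:ℝ)+(d:ℝ)+2)^2 * ((c:ℝ)+1)))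
      = ((∑ m ∈ range c, ENNReal.ofReal
            (1/((((c:ℝ)+(d:ℝ)+2)^2*((c:ℝ)+1))*((m:ℝ)+1))))
          + (∑ j ∈ range d, ENNReal.ofReal
            (1/((((c:ℝ)+(d:ℝ)+2)^2*((c:ℝ)+1))*((c:ℝ)+2+(j:ℝ)))))
          + (ENNReal.ofReal (r22 c d) + ENNReal.ofReal (r31 c d))) := by
    intro c d
    rw [← ENNReal.ofReal_sum_of_nonneg (fun m _ => by positivity),
      ← ENNReal.ofReal_sum_of_nonneg (fun j _ => by positivity),
      ← ENNReal.ofReal_add (r22_nn c d) (r31_nn c d),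
      ← ENNReal.ofReal_add (Finset.sum_nonneg fun m _ => by positivity)
        (Finset.sum_nonneg fun j _ => by positivity),
      ← ENNReal.ofReal_add (add_nonneg
        (Finset.sum_nonneg fun m _ => by positivity)
        (Finset.sum_nonneg fun j _ => by positivity))
        (add_nonneg (r22_nn c d) (r31_nn c d))]
    congr 1
    have hH : H (c+d+2) = (∑ m ∈ range c, 1/((m:ℝ)+1)) + 1/((c:ℝ)+1)
        + (∑ j ∈ range d, 1/((c:ℝ)+2+(j:ℝ))) + 1/((c:ℝ)+(d:ℝ)+2) := by
      have e1 : c+d+2 = (c+d+1)+1 := by omega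
      rw [e1]
      unfold H
      rw [Finset.sum_range_succ, sum_range_split c d (fun m => 1/((m:ℝ)+1))]
      push_cast
      have hx : ∀ x : ℕ, 1/((c:ℝ)+1+(x:ℝ)+1) = 1/((c:ℝ)+2+(x:ℝ)) := by
        intro x; congr 1; ring
      simp only [hx]
      ring
    rw [hH, add_div, add_div, add_div, Finset.sum_div, Finset.sum_div]
    unfold r22 r31
    rw [Finset.sum_congr rfl (fun i (_ : i ∈ range c) => by
        rw [div_div, mul_comm ((i:ℝ)+1) (((c:ℝ)+(d:ℝ)+2)^2*((c:ℝ)+1))] :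
      ∀ i ∈ range c, (1/((i:ℝ)+1))/(((c:ℝ)+(d:ℝ)+2)^2*((c:ℝ)+1))
        = 1/((((c:ℝ)+(d:ℝ)+2)^2*((c:ℝ)+1))*((i:ℝ)+1)))]
    rw [Finset.sum_congr rfl (fun j (_ : j ∈ range d) => by
        rw [div_div, mul_comm ((c:ℝ)+2+(j:ℝ)) (((c:ℝ)+(d:ℝ)+2)^2*((c:ℝ)+1))] :
      ∀ j ∈ range d, (1/((c:ℝ)+2+(j:ℝ)))/(((c:ℝ)+(d:ℝ)+2)^2*((c:ℝ)+1))
        = 1/((((c:ℝ)+(d:ℝ)+2)^2*((c:ℝ)+1))*((c:ℝ)+2+(j:ℝ))))]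
    rw [div_div, div_div]
    ring
  have hT1 : (∑' c : ℕ, ∑' d : ℕ, ∑ m ∈ range c, ENNReal.ofReal
        (1/((((c:ℝ)+(d:ℝ)+2)^2*((c:ℝ)+1))*((m:ℝ)+1)))) = A211 := by
    have swap : ∀ c : ℕ, (∑' d : ℕ, ∑ m ∈ range c, ENNReal.ofReal
        (1/((((c:ℝ)+(d:ℝ)+2)^2*((c:ℝ)+1))*((m:ℝ)+1))))
        = ∑ m ∈ range c, ∑' d : ℕ, ENNReal.ofReal
            (1/((((c:ℝ)+(d:ℝ)+2)^2*((c:ℝ)+1))*((m:ℝ)+1))) := by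
      intro c
      exact Summable.tsum_finsetSum fun m _ => ENNReal.summable
    rw [tsum_congr swap,
      tri (fun c m => ∑' d : ℕ, ENNReal.ofReal
        (1/(((((c:ℕ):ℝ)+(d:ℝ)+2)^2*(((c:ℕ):ℝ)+1))*((m:ℝ)+1))))]
    unfold A211
    apply tsum_congr; intro m
    apply tsum_congr; intro i
    apply tsum_congr; intro d
    congr 1
    unfold r211
    push_cast
    ring_nf
  have hT3 : (∑' c : ℕ, ∑' d : ℕ, ∑ j ∈ range d, ENNReal.ofReal
        (1/((((c:ℝ)+(d:ℝ)+2)^2*((c:ℝ)+1))*((c:ℝ)+2+(j:ℝ))))) = A211 := by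
    have inner : ∀ c : ℕ, (∑' d : ℕ, ∑ j ∈ range d, ENNReal.ofReal
        (1/((((c:ℝ)+(d:ℝ)+2)^2*((c:ℝ)+1))*((c:ℝ)+2+(j:ℝ)))))
        = ∑' j : ℕ, ∑' i : ℕ, ENNReal.ofReal
            (1/((((c:ℝ)+((j+i+1:ℕ):ℝ)+2)^2*((c:ℝ)+1))*((c:ℝ)+2+(j:ℝ)))) := by
      intro c
      exact tri (fun d j => ENNReal.ofReal
        (1/((((c:ℝ)+((d:ℕ):ℝ)+2)^2*((c:ℝ)+1))*((c:ℝ)+2+((j:ℕ):ℝ)))))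
    rw [tsum_congr inner]
    unfold A211
    apply tsum_congr; intro c
    apply tsum_congr; intro j
    apply tsum_congr; intro i
    congr 1
    unfold r211
    push_cast
    ring_nf
  calc (∑' c : ℕ, ∑' d : ℕ, ∑' e : ℕ, ENNReal.ofReal (rP c d e))
      = ∑' c : ℕ, ∑' d : ℕ,
          ENNReal.ofReal (H (c+d+2) / (((c:ℝ)+(d:ℝ)+2)^2 * ((c:ℝ)+1))) := by
        apply tsum_congr; intro c
        exact tsum_congr fun d => S2c_inner c d
    _ = (∑' c : ℕ, ∑' d : ℕ, ∑ m ∈ range c, ENNReal.ofReal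
            (1/((((c:ℝ)+(d:ℝ)+2)^2*((c:ℝ)+1))*((m:ℝ)+1))))
        + ((∑' c : ℕ, ∑' d : ℕ, ∑ j ∈ range d, ENNReal.ofReal
            (1/((((c:ℝ)+(d:ℝ)+2)^2*((c:ℝ)+1))*((c:ℝ)+2+(j:ℝ)))))
          + (A22 + A31)) := by
        unfold A22 A31
        rw [← ENNReal.tsum_add, ← ENNReal.tsum_add, ← ENNReal.tsum_add]
        apply tsum_congr; intro c
        rw [← ENNReal.tsum_add, ← ENNReal.tsum_add, ← ENNReal.tsum_add]
        apply tsum_congr; intro d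
        rw [hsplit c d, add_assoc]
    _ = A211 + (A211 + (A22 + A31)) := by rw [hT1, hT3]

lemma A211_inner_le (c d : ℕ) : (∑' e : ℕ, ENNReal.ofReal (r211 c d e))
    ≤ ENNReal.ofReal (1/(((c:ℝ)+(d:ℝ)+2)^2*((c:ℝ)+1))) := by
  calc (∑' e : ℕ, ENNReal.ofReal (r211 c d e))
      ≤ ∑' e : ℕ, (ENNReal.ofReal (1/(((c:ℝ)+(d:ℝ)+2)*((c:ℝ)+1)))
          * ENNReal.ofReal (1/((((c+d+1:ℕ):ℝ)+(e:ℝ)+1)*(((c+d+1:ℕ):ℝ)+(e:ℝ)+2)))) := by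
        apply ENNReal.tsum_le_tsum
        intro e
        rw [← ENNReal.ofReal_mul (by positivity)]
        apply ENNReal.ofReal_le_ofReal
        unfold r211
        rw [div_mul_div_comm, one_mul]
        apply one_div_le_one_div_of_le (by positivity)
        push_cast
        have hx : (0:ℝ) ≤ (c:ℝ) := Nat.cast_nonneg c
        have hy : (0:ℝ) ≤ (d:ℝ) := Nat.cast_nonneg d
        have hz : (0:ℝ) ≤ (e:ℝ) := Nat.cast_nonneg e
        have key : ((c:ℝ)+(d:ℝ)+1+(e:ℝ)+1)*((c:ℝ)+(d:ℝ)+1+(e:ℝ)+2)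
            ≤ ((c:ℝ)+(d:ℝ)+(e:ℝ)+3)^2 := by nlinarith
        have hP : (0:ℝ) ≤ ((c:ℝ)+(d:ℝ)+2)*((c:ℝ)+1) := by positivity
        nlinarith [mul_le_mul_of_nonneg_left key hP]
    _ = ENNReal.ofReal (1/(((c:ℝ)+(d:ℝ)+2)*((c:ℝ)+1)))
          * ∑' e : ℕ, ENNReal.ofReal
            (1/((((c+d+1:ℕ):ℝ)+(e:ℝ)+1)*(((c+d+1:ℕ):ℝ)+(e:ℝ)+2))) :=
        ENNReal.tsum_mul_left
    _ ≤ ENNReal.ofReal (1/(((c:ℝ)+(d:ℝ)+2)^2*((c:ℝ)+1))) := by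
        rw [ofReal_tsum (fun e => by positivity) (tele_hasSum (c+d+1)),
          ← ENNReal.ofReal_mul (by positivity)]
        apply ENNReal.ofReal_le_ofReal
        rw [div_mul_div_comm, one_mul]
        apply one_div_le_one_div_of_le (by positivity)
        push_cast
        nlinarith [Nat.cast_nonneg (α := ℝ) c, Nat.cast_nonneg (α := ℝ) d]
    
lemma A21_inner_le (c : ℕ) :
    (∑' d : ℕ, ENNReal.ofReal (1/(((c:ℝ)+(d:ℝ)+2)^2*((c:ℝ)+1))))
      ≤ ENNReal.ofReal (1/((c:ℝ)+1)^2) := by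
  calc (∑' d : ℕ, ENNReal.ofReal (1/(((c:ℝ)+(d:ℝ)+2)^2*((c:ℝ)+1))))
      ≤ ∑' d : ℕ, (ENNReal.ofReal (1/((c:ℝ)+1))
          * ENNReal.ofReal (1/(((c:ℝ)+(d:ℝ)+1)*((c:ℝ)+(d:ℝ)+2)))) := by
        apply ENNReal.tsum_le_tsum
        intro d
        rw [← ENNReal.ofReal_mul (by positivity)]
        apply ENNReal.ofReal_le_ofReal
        rw [div_mul_div_comm, one_mul]
        apply one_div_le_one_div_of_le (by positivity)
        have hx : (0:ℝ) ≤ (c:ℝ) := Nat.cast_nonneg c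
        have hy : (0:ℝ) ≤ (d:ℝ) := Nat.cast_nonneg d
        nlinarith [mul_nonneg hx hy, mul_nonneg (mul_nonneg hx hx) hy]
    _ = ENNReal.ofReal (1/((c:ℝ)+1))
          * ∑' d : ℕ, ENNReal.ofReal (1/(((c:ℝ)+(d:ℝ)+1)*((c:ℝ)+(d:ℝ)+2))) :=
        ENNReal.tsum_mul_left
    _ = ENNReal.ofReal (1/((c:ℝ)+1)^2) := by
        rw [ofReal_tsum (fun d => by positivity) (tele_hasSum c),
          ← ENNReal.ofReal_mul (by positivity)]
        congr 1
        rw [div_mul_div_comm, one_mul]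
        congr 1
        ring

lemma A211_ne_top : A211 ≠ ⊤ := by
  apply ne_top_of_le_ne_top sq_tsum_ne_top
  apply le_trans (ENNReal.tsum_le_tsum fun c =>
    ENNReal.tsum_le_tsum fun d => A211_inner_le c d)
  exact ENNReal.tsum_le_tsum A21_inner_le

lemma key2 : A211 = A22 + A31 := by
  have h := S2ab.symm.trans S2c
  rw [ENNReal.add_right_inj A211_ne_top, ENNReal.add_right_inj A211_ne_top] at h
  exact h

lemma main_ennreal : A4 = A211 := by
  rw [key1, key2, add_comm]

def E : (ℕ × ℕ × ℕ) ≃ {t : ℕ × ℕ × ℕ // t.2.1 < t.1 ∧ t.2.2 < t.2.1 ∧ 0 < t.2.2} where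
  toFun p := ⟨(p.1+p.2.1+p.2.2+3, (p.1+p.2.1+2, p.1+1)), by
    refine ⟨?_, ?_, ?_⟩ <;> simp <;> omega⟩
  invFun t := (t.1.2.2 - 1, (t.1.2.1 - t.1.2.2 - 1, t.1.1 - t.1.2.1 - 1))
  left_inv p := by
    rcases p with ⟨c, d, e⟩
    simp [Prod.ext_iff]
    omega
  right_inv t := by
    rcases t with ⟨⟨n, k, l⟩, h1, h2, h3⟩
    have hk : k < n := h1
    have hl : l < k := h2
    have hl0 : 0 < l := h3
    apply Subtype.ext
    show ((l-1)+(k-l-1)+(n-k-1)+3, ((l-1)+(k-l-1)+2, (l-1)+1)) = (n, k, l)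
    simp only [Prod.mk.injEq]
    omega

lemma pow4_summable : Summable (fun m : ℕ => (1:ℝ)/((m:ℝ)+1)^4) := by
  have h := (summable_nat_add_iff (f := fun n : ℕ => 1/(n:ℝ)^4) 1).mpr
    ((Real.summable_one_div_nat_pow (p := 4)).mpr (by norm_num))
  apply h.congr
  intro n
  push_cast
  ring

lemma prod_tsum_eq : (∑' p : ℕ × ℕ × ℕ, ENNReal.ofReal (r211 p.1 p.2.1 p.2.2)) = A211 := by
  rw [ENNReal.tsum_prod']
  unfold A211
  apply tsum_congr; intro c
  rw [ENNReal.tsum_prod']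

lemma summable_r211 : Summable (fun p : ℕ × ℕ × ℕ => r211 p.1 p.2.1 p.2.2) := by
  have hne : (∑' p : ℕ × ℕ × ℕ,
      ((r211 p.1 p.2.1 p.2.2).toNNReal : ℝ≥0∞)) ≠ ⊤ := by
    have : ∀ p : ℕ × ℕ × ℕ, ((r211 p.1 p.2.1 p.2.2).toNNReal : ℝ≥0∞)
        = ENNReal.ofReal (r211 p.1 p.2.1 p.2.2) := fun p => rfl
    rw [tsum_congr this, prod_tsum_eq]
    exact A211_ne_top
  have h := ENNReal.tsum_coe_ne_top_iff_summable.mp hne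
  have h2 := NNReal.summable_coe.mpr h
  apply h2.congr
  intro p
  exact Real.coe_toNNReal _ (r211_nn _ _ _)

theorem final : (∑' m : ℕ, (1 : ℝ) / ((m : ℝ) + 1) ^ 4) =
    ∑' t : {t : ℕ × ℕ × ℕ // t.2.1 < t.1 ∧ t.2.2 < t.2.1 ∧ 0 < t.2.2},
      (1 : ℝ) / ((t.1.1 : ℝ) ^ 2 * (t.1.2.1 : ℝ) * (t.1.2.2 : ℝ)) := by
  rw [← Equiv.tsum_eq E (fun t => (1 : ℝ) / ((t.1.1 : ℝ) ^ 2 * (t.1.2.1 : ℝ) * (t.1.2.2 : ℝ)))]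
  have hterm : ∀ p : ℕ × ℕ × ℕ,
      (1 : ℝ) / (((E p).1.1 : ℝ) ^ 2 * ((E p).1.2.1 : ℝ) * ((E p).1.2.2 : ℝ))
        = r211 p.1 p.2.1 p.2.2 := by
    intro ⟨c, d, e⟩
    show (1:ℝ) / (((c+d+e+3 : ℕ):ℝ)^2 * ((c+d+2 : ℕ):ℝ) * ((c+1 : ℕ):ℝ)) = _
    unfold r211
    push_cast
    congr 1
    ring
  rw [tsum_congr hterm]
  apply (ENNReal.ofReal_eq_ofReal_iff
    (tsum_nonneg fun m => by positivity)
    (tsum_nonneg fun p => r211_nn _ _ _)).mp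
  rw [ENNReal.ofReal_tsum_of_nonneg (fun m => by positivity) pow4_summable,
    ENNReal.ofReal_tsum_of_nonneg (fun p => r211_nn _ _ _) summable_r211]
  have h4 : (∑' m : ℕ, ENNReal.ofReal ((1:ℝ)/((m:ℝ)+1)^4)) = A4 := rfl
  rw [h4, prod_tsum_eq, main_ennreal]

end

end ZD


/-- The duality case `ζ(4) = ζ(2,1,1)`:
`Σ_{m≥1} 1/m⁴ = Σ_{m₁>m₂>m₃≥1} 1/(m₁² m₂ m₃)`. -/
theorem zeta_four_eq_zeta_two_one_one :
    (∑' m : ℕ, (1 : ℝ) / ((m : ℝ) + 1) ^ 4) =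
      ∑' t : {t : ℕ × ℕ × ℕ // t.2.1 < t.1 ∧ t.2.2 < t.2.1 ∧ 0 < t.2.2},
        (1 : ℝ) / ((t.1.1 : ℝ) ^ 2 * (t.1.2.1 : ℝ) * (t.1.2.2 : ℝ)) := by
  exact ZD.final
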